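/- Suppose λ is a Young diagram with n boxes, r(λ), c(λ) ≤ A ≤ n, and σ₁, σ₂ ∈ S_l with π = σ₁σ₂. Then N^λ(σ₁,σ₂) ≤ A^{|C(σ₁)|+|C(σ₂)|} (n/A²)^{orbits(σ₁,σ₂)} ≤ A^{l−|C(π)|} n^{|C(π)|} (1/A)^{o(σ₁,σ₂)}, where orbits(σ₁,σ₂) is the number of orbits of the subgroup ⟨σ₁,σ₂⟩ acting on {1,…,l}, and o(σ₁,σ₂) = l − |C(σ₁)| − |C(σ₂)| + orbits(σ₁,σ₂). -/

import Mathlib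

open scoped Classical
open MeasureTheory ProbabilityTheory

noncomputable section

namespace Paper

/-- `|σ|`: the minimal number of factors needed to write `σ` as a product of transpositions. -/
def permLength {α : Type*} [DecidableEq α] [Fintype α] (σ : Equiv.Perm α) : ℕ :=
  sInf {k | ∃ L : List (Equiv.Perm α), L.length = k ∧ (∀ τ ∈ L, τ.IsSwap) ∧ L.prod = σ}

/-- `r(λ)`: the number of rows of a Young diagram. -/
def rows (μ : YoungDiagram) : ℕ := μ.colLen 0

/-- `c(λ)`: the number of columns of a Young diagram. -/
def cols (μ : YoungDiagram) : ℕ := μ.rowLen 0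

/-- The set of minimal representatives of the cycles (orbits, fixed points included) of `σ`. -/
def cycleReps {l : ℕ} (σ : Equiv.Perm (Fin l)) : Finset (Fin l) :=
  Finset.univ.filter fun m => ∀ x, σ.SameCycle m x → m ≤ x

/-- `|C(σ)|`: the number of cycles (orbits, fixed points included) of `σ`. -/
def cyclesCount {l : ℕ} (σ : Equiv.Perm (Fin l)) : ℕ := (cycleReps σ).card

/-- The multiset of the lengths of all the cycles of `σ` (fixed points included). -/
def fullCycleType {l : ℕ} (σ : Equiv.Perm (Fin l)) : Multiset ℕ :=
  (cycleReps σ).val.map fun m => (Finset.univ.filter fun a => σ.SameCycle m a).card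

/-- `N^λ(σ₁,σ₂)`: the number of colorings of the cycles of `σ₁` (by columns of `λ`, numbered
from 1) and of the cycles of `σ₂` (by rows of `λ`, numbered from 1), compatible with `λ`;
a coloring is encoded as a pair of functions on points, constant on the respective cycles.
Recall that in Mathlib a cell of a Young diagram is a pair (row index, column index),
both 0-based, so the paper's requirement `(h(c₁), h(c₂)) ∈ λ` (column first, 1-based) reads
`(h₂ m - 1, h₁ m - 1) ∈ μ`. -/
def Ncol {l : ℕ} (μ : YoungDiagram) (σ₁ σ₂ : Equiv.Perm (Fin l)) : ℕ :=
  Nat.card {h : (Fin l → ℕ) × (Fin l → ℕ) //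
    (∀ m, h.1 (σ₁ m) = h.1 m) ∧ (∀ m, h.2 (σ₂ m) = h.2 m) ∧
    ∀ m, 1 ≤ h.1 m ∧ 1 ≤ h.2 m ∧ ((h.2 m - 1, h.1 m - 1) : ℕ × ℕ) ∈ μ}

/-- `P_λ`: the permutations preserving each row of `λ` (with respect to the labelling `f`). -/
def youngP {n : ℕ} (μ : YoungDiagram) (f : Fin n ≃ μ.cells) : Finset (Equiv.Perm (Fin n)) :=
  Finset.univ.filter fun σ => ∀ i, ((f (σ i)) : ℕ × ℕ).1 = ((f i) : ℕ × ℕ).1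

/-- `Q_λ`: the permutations preserving each column of `λ` (with respect to the labelling `f`). -/
def youngQ {n : ℕ} (μ : YoungDiagram) (f : Fin n ≃ μ.cells) : Finset (Equiv.Perm (Fin n)) :=
  Finset.univ.filter fun σ => ∀ i, ((f (σ i)) : ℕ × ℕ).2 = ((f i) : ℕ × ℕ).2

/-- `a_λ = Σ_{σ ∈ P_λ} σ` in the group algebra. -/
def aElt {n : ℕ} (μ : YoungDiagram) (f : Fin n ≃ μ.cells) :
    MonoidAlgebra ℂ (Equiv.Perm (Fin n)) :=
  ∑ σ ∈ youngP μ f, MonoidAlgebra.single σ 1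

/-- `b_λ = Σ_{σ ∈ Q_λ} sgn(σ) σ` in the group algebra. -/
def bElt {n : ℕ} (μ : YoungDiagram) (f : Fin n ≃ μ.cells) :
    MonoidAlgebra ℂ (Equiv.Perm (Fin n)) :=
  ∑ σ ∈ youngQ μ f, MonoidAlgebra.single σ ((Equiv.Perm.sign σ : ℤ) : ℂ)

/-- `V_λ = ℂ[S_n] b_λ a_λ`, the left ideal generated by the Young symmetrizer. -/
def youngModule {n : ℕ} (μ : YoungDiagram) (f : Fin n ≃ μ.cells) :
    Submodule ℂ (MonoidAlgebra ℂ (Equiv.Perm (Fin n))) :=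
  LinearMap.range (LinearMap.mulRight ℂ (bElt μ f * aElt μ f))

/-- `ρ^λ(π)`: left multiplication by `π` on `V_λ`. -/
def rho {n : ℕ} (μ : YoungDiagram) (f : Fin n ≃ μ.cells) (π : Equiv.Perm (Fin n)) :
    youngModule μ f →ₗ[ℂ] youngModule μ f :=
  (LinearMap.mulLeft ℂ (MonoidAlgebra.single π (1 : ℂ))).restrict (fun x hx => by
    obtain ⟨y, rfl⟩ := LinearMap.mem_range.mp hx
    exact LinearMap.mem_range.mpr ⟨MonoidAlgebra.single π (1 : ℂ) * y, by
      simp [LinearMap.mulRight_apply, LinearMap.mulLeft_apply, mul_assoc]⟩)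

/-- The normalized character `χ^λ(π) = Tr ρ^λ(π) / Tr ρ^λ(e)`. -/
def chi {n : ℕ} (μ : YoungDiagram) (f : Fin n ≃ μ.cells) (π : Equiv.Perm (Fin n)) : ℂ :=
  LinearMap.trace ℂ (youngModule μ f) (rho μ f π) /
    LinearMap.trace ℂ (youngModule μ f) (rho μ f 1)

/-- The embedding of `S_l` into `S_n` (permutations fixing `l+1,…,n`). -/
def embed {l n : ℕ} (hl : l ≤ n) (π : Equiv.Perm (Fin l)) : Equiv.Perm (Fin n) :=
  π.viaFintypeEmbedding (Fin.castLEEmb hl)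

/-- The normalized character `Σ^λ(π) = (n)_l χ^λ(π)` for `π ∈ S_l`, `l ≤ n`. -/
def normChar {n l : ℕ} (μ : YoungDiagram) (f : Fin n ≃ μ.cells) (hl : l ≤ n)
    (π : Equiv.Perm (Fin l)) : ℂ :=
  (n.descFactorial l : ℂ) * chi μ f (embed hl π)

/-- `ψ(c) = max_{a ∈ c} φ(a)`: the maximum of `φ` over the cycle of `τ` containing `m`. -/
def cycleMax {l r : ℕ} (τ : Equiv.Perm (Fin l)) (φ : Fin l → Fin r) (m : Fin l) : Fin r :=
  ((Finset.univ.filter fun a => τ.SameCycle m a).image φ).max'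
    ⟨φ m, Finset.mem_image_of_mem φ
      (Finset.mem_filter.mpr ⟨Finset.mem_univ m, Equiv.Perm.SameCycle.refl τ m⟩)⟩

/-- The number of orbits of the subgroup `⟨σ₁, σ₂⟩` acting on `{1,…,l}`. -/
def jointOrbits {l : ℕ} (σ₁ σ₂ : Equiv.Perm (Fin l)) : ℕ :=
  Nat.card (MulAction.orbitRel.Quotient (Subgroup.closure {σ₁, σ₂}) (Fin l))

/-- `o(σ₁,σ₂) = l − |C(σ₁)| − |C(σ₂)| + orbits(σ₁,σ₂)` (as an integer). -/
def oStat {l : ℕ} (σ₁ σ₂ : Equiv.Perm (Fin l)) : ℤ :=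
  (l : ℤ) - cyclesCount σ₁ - cyclesCount σ₂ + jointOrbits σ₁ σ₂

/-- The free cumulant `R_{k+1}^λ` of (the transition measure of) `λ`, given by the
combinatorial formula: the sum of `(−1)^{|σ₁|} N^λ(σ₁,σ₂)` over the minimal factorizations
`σ₁σ₂ = (1,2,…,k)` in `S_k`, i.e. those with `|σ₁| + |σ₂| = k − 1`. -/
def freeCumulant (μ : YoungDiagram) (k : ℕ) : ℂ :=
  ∑ p ∈ Finset.univ.filter (fun p : Equiv.Perm (Fin k) × Equiv.Perm (Fin k) =>
      p.1 * p.2 = finRotate k ∧ permLength p.1 + permLength p.2 = k - 1),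
    (-1 : ℂ) ^ permLength p.1 * (Ncol μ p.1 p.2 : ℂ)

/-- `Ñ^λ(σ₁,σ₂)`: the number of injective functions from `{1,…,l}` to the boxes of `λ`
such that the row coordinate is constant on each cycle of `σ₂` and the column coordinate
is constant on each cycle of `σ₁`.  (In Mathlib a cell is (row, column).) -/
def Ntilde {l : ℕ} (μ : YoungDiagram) (σ₁ σ₂ : Equiv.Perm (Fin l)) : ℕ :=
  Nat.card {f : Fin l → μ.cells // Function.Injective f ∧
    (∀ m, ((f (σ₂ m)) : ℕ × ℕ).1 = ((f m) : ℕ × ℕ).1) ∧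
    (∀ m, ((f (σ₁ m)) : ℕ × ℕ).2 = ((f m) : ℕ × ℕ).2)}

/-- `N̂^λ(σ₁,σ₂)`: the number of all functions from `{1,…,l}` to the boxes of `λ`
such that the row coordinate is constant on each cycle of `σ₂` and the column coordinate
is constant on each cycle of `σ₁`. -/
def Nhat {l : ℕ} (μ : YoungDiagram) (σ₁ σ₂ : Equiv.Perm (Fin l)) : ℕ :=
  Nat.card {f : Fin l → μ.cells //
    (∀ m, ((f (σ₂ m)) : ℕ × ℕ).1 = ((f m) : ℕ × ℕ).1) ∧
    (∀ m, ((f (σ₁ m)) : ℕ × ℕ).2 = ((f m) : ℕ × ℕ).2)}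

/-- The number of column inversions of a permutation `σ` of the boxes of `λ`: the number of
pairs of boxes `□₁, □₂` such that `σ(□₁), σ(□₂)` are in the same column, `r(□₁) < r(□₂)` and
`r(σ(□₁)) > r(σ(□₂))`. -/
def invCount (μ : YoungDiagram) (σ : Equiv.Perm μ.cells) : ℕ :=
  (Finset.univ.filter fun bb : (↥μ.cells × ↥μ.cells) =>
    ((σ bb.1 : ℕ × ℕ).2 = (σ bb.2 : ℕ × ℕ).2 ∧ (bb.1 : ℕ × ℕ).1 < (bb.2 : ℕ × ℕ).1 ∧
      (σ bb.2 : ℕ × ℕ).1 < (σ bb.1 : ℕ × ℕ).1)).card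

/-- `(−1)^{inv(σ)}`, set to `0` when two boxes of the same row are mapped by `σ` to boxes
of the same column. -/
def invSign (μ : YoungDiagram) (σ : Equiv.Perm μ.cells) : ℂ :=
  if ∃ b₁ b₂ : μ.cells, b₁ ≠ b₂ ∧ (b₁ : ℕ × ℕ).1 = (b₂ : ℕ × ℕ).1 ∧
      (σ b₁ : ℕ × ℕ).2 = (σ b₂ : ℕ × ℕ).2
  then 0 else (-1 : ℂ) ^ invCount μ σ

/-- The standard complex centered Gaussian distribution, realized as the distribution of
`(x + i y)/√2` with `x, y` independent standard real Gaussians. -/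
def stdComplexGaussian : Measure ℂ :=
  ((gaussianReal 0 1).prod (gaussianReal 0 1)).map
    fun p => ((p.1 : ℂ) + (p.2 : ℂ) * Complex.I) / (Real.sqrt 2 : ℂ)

/-- The random matrix `T_λ` built from the family of entries `t`. -/
def matOf {N : ℕ} {Ω : Type*} (t : Fin N → Fin N → Ω → ℂ) (ω : Ω) :
    Matrix (Fin N) (Fin N) ℂ :=
  Matrix.of fun i j => t i j ω

/-- The hypotheses on the entries of the random matrix `T_λ`: independent entries, standard
complex Gaussian on the boxes of `λ` and zero outside.  The matrix entry `t i j` (0-based)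
corresponds to the box in column `i+1` and row `j+1` of `λ` (the paper's `(i,j) ∈ λ` with the
French convention), i.e. to the Mathlib cell `(j, i)`. -/
structure IsGaussianOn {N : ℕ} {Ω : Type*} [MeasureSpace Ω]
    (t : Fin N → Fin N → Ω → ℂ) (μ : YoungDiagram) : Prop where
  prob : IsProbabilityMeasure (volume : Measure Ω)
  meas : ∀ i j, Measurable (t i j)
  indep : iIndepFun (fun ij : Fin N × Fin N => t ij.1 ij.2) volume
  gauss : ∀ i j : Fin N, (((j : ℕ), (i : ℕ)) : ℕ × ℕ) ∈ μ →
    Measure.map (t i j) volume = stdComplexGaussian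
  zero : ∀ i j : Fin N, (((j : ℕ), (i : ℕ)) : ℕ × ℕ) ∉ μ → t i j = 0

/-! ### Bipartite graphs -/

/-- The simple graph on `C₁ ⊕ C₂` associated to a bipartite edge set `E ⊆ C₁ × C₂`. -/
def bipGraph {C₁ C₂ : Type*} (E : Finset (C₁ × C₂)) : SimpleGraph (C₁ ⊕ C₂) where
  Adj x y := (∃ a b, (a, b) ∈ E ∧ x = Sum.inl a ∧ y = Sum.inr b) ∨
             (∃ a b, (a, b) ∈ E ∧ x = Sum.inr b ∧ y = Sum.inl a)
  symm := by
    constructor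
    rintro x y (⟨a, b, h, rfl, rfl⟩ | ⟨a, b, h, rfl, rfl⟩)
    · exact Or.inr ⟨a, b, h, rfl, rfl⟩
    · exact Or.inl ⟨a, b, h, rfl, rfl⟩
  loopless := by
    constructor
    rintro x (⟨a, b, h, rfl, h2⟩ | ⟨a, b, h, rfl, h2⟩)
    · exact Sum.inl_ne_inr h2
    · exact Sum.inr_ne_inl h2

/-- The degree of a left vertex in the bipartite edge set `E`. -/
def degL {C₁ C₂ : Type*} (E : Finset (C₁ × C₂)) (a : C₁) : ℕ :=
  (E.filter fun e => e.1 = a).card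

/-- The degree of a right vertex in the bipartite edge set `E`. -/
def degR {C₁ C₂ : Type*} (E : Finset (C₁ × C₂)) (b : C₂) : ℕ :=
  (E.filter fun e => e.2 = b).card

/-- `E'` is a disjoint union of complete bipartite graphs of the form `G_{1,1}`, `G_{k,1}`,
`G_{1,k}` covering all the vertices: every vertex has nonzero degree and every edge has an
endpoint of degree one (i.e. every connected component is a star). -/
def IsStarDecomposition {C₁ C₂ : Type*} (E' : Finset (C₁ × C₂)) : Prop :=
  (∀ a, 0 < degL E' a) ∧ (∀ b, 0 < degR E' b) ∧
    ∀ e ∈ E', degL E' e.1 = 1 ∨ degR E' e.2 = 1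

/-- `N^λ(G)`: the number of colorings of the vertices of the bipartite graph with edge set `E`
(left vertices colored by columns of `λ`, right vertices by rows of `λ`, numbered from 1)
compatible with `λ`. -/
def NcolG {C₁ C₂ : Type*} (μ : YoungDiagram) (E : Finset (C₁ × C₂)) : ℕ :=
  Nat.card {h : (C₁ → ℕ) × (C₂ → ℕ) //
    ∀ e ∈ E, 1 ≤ h.1 e.1 ∧ 1 ≤ h.2 e.2 ∧ ((h.2 e.2 - 1, h.1 e.1 - 1) : ℕ × ℕ) ∈ μ}

section NcolAux

variable {l : ℕ}

private lemma cyc_nonempty (σ : Equiv.Perm (Fin l)) (m : Fin l) :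
    (Finset.univ.filter fun a => σ.SameCycle m a).Nonempty :=
  ⟨m, Finset.mem_filter.mpr ⟨Finset.mem_univ m, Equiv.Perm.SameCycle.refl σ m⟩⟩

/-- The minimal element of the cycle of `m`. -/
def minCyc (σ : Equiv.Perm (Fin l)) (m : Fin l) : Fin l :=
  (Finset.univ.filter fun a => σ.SameCycle m a).min' (cyc_nonempty σ m)

lemma sameCycle_minCyc (σ : Equiv.Perm (Fin l)) (m : Fin l) : σ.SameCycle m (minCyc σ m) :=
  (Finset.mem_filter.mp ((Finset.univ.filter fun a => σ.SameCycle m a).min'_mem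
    (cyc_nonempty σ m))).2

lemma minCyc_le (σ : Equiv.Perm (Fin l)) {m x : Fin l} (h : σ.SameCycle m x) :
    minCyc σ m ≤ x :=
  Finset.min'_le _ x (Finset.mem_filter.mpr ⟨Finset.mem_univ x, h⟩)

lemma minCyc_mem_cycleReps (σ : Equiv.Perm (Fin l)) (m : Fin l) :
    minCyc σ m ∈ cycleReps σ := by
  refine Finset.mem_filter.mpr ⟨Finset.mem_univ _, fun x hx => ?_⟩
  exact minCyc_le σ ((sameCycle_minCyc σ m).trans hx)

lemma apply_pow_eq {α : Type*} (σ : Equiv.Perm α) (h : α → ℕ)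
    (hh : ∀ m, h (σ m) = h m) : ∀ (k : ℕ) (x : α), h ((σ ^ k) x) = h x := by
  intro k
  induction k with
  | zero => intro x; simp
  | succ k ih =>
      intro x
      rw [pow_succ, Equiv.Perm.mul_apply, ih (σ x), hh x]

lemma const_on_sameCycle {σ : Equiv.Perm (Fin l)} (h : Fin l → ℕ)
    (hh : ∀ m, h (σ m) = h m) {m x : Fin l} (hc : σ.SameCycle m x) : h m = h x := by
  obtain ⟨i, hi⟩ := hc
  match i with
  | Int.ofNat k =>
      rw [← hi]
      simp only [Int.ofNat_eq_coe, zpow_natCast]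
      exact (apply_pow_eq σ h hh k m).symm
  | Int.negSucc k =>
      rw [zpow_negSucc] at hi
      have hx : (σ ^ (k + 1)) x = m := by rw [← hi]; exact Equiv.apply_symm_apply _ _
      rw [← hx]
      exact apply_pow_eq σ h hh (k + 1) x

lemma qmk_eq_of_sameCycle (σ₁ σ₂ : Equiv.Perm (Fin l)) {τ : Equiv.Perm (Fin l)}
    (hτ : τ ∈ Subgroup.closure ({σ₁, σ₂} : Set (Equiv.Perm (Fin l)))) {x y : Fin l}
    (h : τ.SameCycle x y) :
    (Quotient.mk'' x :
        MulAction.orbitRel.Quotient (Subgroup.closure ({σ₁, σ₂} : Set (Equiv.Perm (Fin l))))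
          (Fin l)) = Quotient.mk'' y := by
  obtain ⟨i, hi⟩ := h
  refine Quotient.eq''.mpr (MulAction.orbitRel_apply.mpr ?_)
  refine ⟨⟨τ ^ (-i), Subgroup.zpow_mem _ hτ _⟩, ?_⟩
  show (τ ^ (-i)) • y = x
  rw [← hi, zpow_neg]
  exact Equiv.symm_apply_apply _ _

lemma jointOrbits_le {σ₁ σ₂ τ : Equiv.Perm (Fin l)}
    (hτ : τ ∈ Subgroup.closure ({σ₁, σ₂} : Set (Equiv.Perm (Fin l)))) :
    jointOrbits σ₁ σ₂ ≤ cyclesCount τ := by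
  classical
  rw [cyclesCount, ← Nat.card_eq_finsetCard]
  refine Nat.card_le_card_of_injective
    (fun q => (⟨minCyc τ q.out, minCyc_mem_cycleReps τ _⟩ : {x // x ∈ cycleReps τ}))
    fun q q' hqq => ?_
  have h1 := qmk_eq_of_sameCycle σ₁ σ₂ hτ (sameCycle_minCyc τ q.out)
  have h2 := qmk_eq_of_sameCycle σ₁ σ₂ hτ (sameCycle_minCyc τ q'.out)
  have h3 : minCyc τ q.out = minCyc τ q'.out := congrArg Subtype.val hqq
  have := h1.trans (h3 ▸ h2.symm)
  rwa [Quotient.out_eq', Quotient.out_eq'] at this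

lemma cyclesCount_le (σ : Equiv.Perm (Fin l)) : cyclesCount σ ≤ l := by
  calc cyclesCount σ ≤ Finset.univ.card := Finset.card_le_univ _
  _ = l := by simp

lemma cyclesCount_pos (σ : Equiv.Perm (Fin l)) (hl : 0 < l) : 0 < cyclesCount σ :=
  Finset.card_pos.mpr ⟨minCyc σ ⟨0, hl⟩, minCyc_mem_cycleReps σ _⟩

/-- The main counting bound. -/
lemma Ncol_count_bound (μ : YoungDiagram) (σ₁ σ₂ : Equiv.Perm (Fin l)) :
    jointOrbits σ₁ σ₂ ≤ cyclesCount σ₁ ∧ jointOrbits σ₁ σ₂ ≤ cyclesCount σ₂ ∧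
      Ncol μ σ₁ σ₂ ≤ μ.card ^ jointOrbits σ₁ σ₂ *
        (cols μ ^ (cyclesCount σ₁ - jointOrbits σ₁ σ₂) *
          rows μ ^ (cyclesCount σ₂ - jointOrbits σ₁ σ₂)) := by
  classical
  set G := Subgroup.closure ({σ₁, σ₂} : Set (Equiv.Perm (Fin l))) with hG
  letI Q := MulAction.orbitRel.Quotient G (Fin l)
  haveI : Fintype Q := Fintype.ofFinite Q
  have hσ₁G : σ₁ ∈ G := Subgroup.subset_closure (by simp)
  have hσ₂G : σ₂ ∈ G := Subgroup.subset_closure (by simp)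
  have hjo : jointOrbits σ₁ σ₂ = Fintype.card Q := Nat.card_eq_fintype_card
  -- injectivity of the minimal-cycle-representative maps
  have hinj : ∀ (τ : Equiv.Perm (Fin l)), τ ∈ G →
      Function.Injective (fun q : Q => minCyc τ q.out) := by
    intro τ hτ q q' hqq
    have hqq' : minCyc τ q.out = minCyc τ q'.out := hqq
    have h1 := qmk_eq_of_sameCycle σ₁ σ₂ hτ (sameCycle_minCyc τ q.out)
    have h2 := qmk_eq_of_sameCycle σ₁ σ₂ hτ (sameCycle_minCyc τ q'.out)
    rw [Quotient.out_eq'] at h1 h2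
    rw [hqq'] at h1
    exact h1.trans h2.symm
  set D₁ : Finset (Fin l) := Finset.image (fun q : Q => minCyc σ₁ q.out) Finset.univ with hD₁
  set D₂ : Finset (Fin l) := Finset.image (fun q : Q => minCyc σ₂ q.out) Finset.univ with hD₂
  have hD₁card : D₁.card = jointOrbits σ₁ σ₂ := by
    rw [hD₁, Finset.card_image_of_injective _ (hinj σ₁ hσ₁G), Finset.card_univ, hjo]
  have hD₂card : D₂.card = jointOrbits σ₁ σ₂ := by
    rw [hD₂, Finset.card_image_of_injective _ (hinj σ₂ hσ₂G), Finset.card_univ, hjo]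
  have hD₁sub : D₁ ⊆ cycleReps σ₁ := by
    intro x hx
    obtain ⟨q, _, rfl⟩ := Finset.mem_image.mp hx
    exact minCyc_mem_cycleReps σ₁ _
  have hD₂sub : D₂ ⊆ cycleReps σ₂ := by
    intro x hx
    obtain ⟨q, _, rfl⟩ := Finset.mem_image.mp hx
    exact minCyc_mem_cycleReps σ₂ _
  have hle₁ : jointOrbits σ₁ σ₂ ≤ cyclesCount σ₁ :=
    hD₁card ▸ Finset.card_le_card hD₁sub
  have hle₂ : jointOrbits σ₁ σ₂ ≤ cyclesCount σ₂ :=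
    hD₂card ▸ Finset.card_le_card hD₂sub
  refine ⟨hle₁, hle₂, ?_⟩
  set E₁ : Finset (Fin l) := cycleReps σ₁ \ D₁ with hE₁
  set E₂ : Finset (Fin l) := cycleReps σ₂ \ D₂ with hE₂
  have hE₁card : E₁.card = cyclesCount σ₁ - jointOrbits σ₁ σ₂ := by
    rw [hE₁, Finset.card_sdiff_of_subset hD₁sub, hD₁card]; rfl
  have hE₂card : E₂.card = cyclesCount σ₂ - jointOrbits σ₁ σ₂ := by
    rw [hE₂, Finset.card_sdiff_of_subset hD₂sub, hD₂card]; rfl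
  -- the set of colorings
  set S := {h : (Fin l → ℕ) × (Fin l → ℕ) //
    (∀ m, h.1 (σ₁ m) = h.1 m) ∧ (∀ m, h.2 (σ₂ m) = h.2 m) ∧
    ∀ m, 1 ≤ h.1 m ∧ 1 ≤ h.2 m ∧ ((h.2 m - 1, h.1 m - 1) : ℕ × ℕ) ∈ μ} with hS
  have hNcol : Ncol μ σ₁ σ₂ = Nat.card S := rfl
  have hcolbd : ∀ (s : S) (m : Fin l), s.1.1 m - 1 < cols μ := by
    intro s m
    have hmem := (s.2.2.2 m).2.2
    rw [YoungDiagram.mem_iff_lt_rowLen] at hmem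
    exact lt_of_lt_of_le hmem (μ.rowLen_anti 0 _ (Nat.zero_le _))
  have hrowbd : ∀ (s : S) (m : Fin l), s.1.2 m - 1 < rows μ := by
    intro s m
    have hmem := (s.2.2.2 m).2.2
    rw [YoungDiagram.mem_iff_lt_colLen] at hmem
    exact lt_of_lt_of_le hmem (μ.colLen_anti 0 _ (Nat.zero_le _))
  -- the injection
  have key : Nat.card S ≤ Nat.card ((Q → {x // x ∈ μ.cells}) ×
      (({x // x ∈ E₁} → Fin (cols μ)) × ({x // x ∈ E₂} → Fin (rows μ)))) := by
    refine Nat.card_le_card_of_injective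
      (fun s => ⟨fun q => ⟨(s.1.2 q.out - 1, s.1.1 q.out - 1),
          (YoungDiagram.mem_cells _).mpr (s.2.2.2 q.out).2.2⟩,
        fun m => ⟨s.1.1 m.1 - 1, hcolbd s m.1⟩,
        fun m => ⟨s.1.2 m.1 - 1, hrowbd s m.1⟩⟩) ?_
    intro s t hst
    have hq : ∀ q : Q, s.1.2 q.out - 1 = t.1.2 q.out - 1 ∧
        s.1.1 q.out - 1 = t.1.1 q.out - 1 := by
      intro q
      have h1 := congrFun (congrArg Prod.fst hst) q
      rw [Subtype.ext_iff, Prod.ext_iff] at h1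
      exact h1
    have hc1 : ∀ m : Fin l, m ∈ E₁ → s.1.1 m - 1 = t.1.1 m - 1 := by
      intro m hm
      have h1 := congrFun (congrArg (fun p => p.2.1) hst) ⟨m, hm⟩
      exact congrArg Fin.val h1
    have hc2 : ∀ m : Fin l, m ∈ E₂ → s.1.2 m - 1 = t.1.2 m - 1 := by
      intro m hm
      have h1 := congrFun (congrArg (fun p => p.2.2) hst) ⟨m, hm⟩
      exact congrArg Fin.val h1
    -- values on cycle representatives agree
    have hrep1 : ∀ x ∈ cycleReps σ₁, s.1.1 x = t.1.1 x := by
      intro x hx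
      by_cases hxD : x ∈ D₁
      · obtain ⟨q, _, hq'⟩ := Finset.mem_image.mp hxD
        have hcyc : σ₁.SameCycle q.out x := hq' ▸ sameCycle_minCyc σ₁ q.out
        have es := const_on_sameCycle s.1.1 s.2.1 hcyc
        have et := const_on_sameCycle t.1.1 t.2.1 hcyc
        have h1s := (s.2.2.2 q.out).1
        have h1t := (t.2.2.2 q.out).1
        have := (hq q).2
        omega
      · have hxE : x ∈ E₁ := Finset.mem_sdiff.mpr ⟨hx, hxD⟩
        have := hc1 x hxE
        have h1s := (s.2.2.2 x).1
        have h1t := (t.2.2.2 x).1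
        omega
    have hrep2 : ∀ x ∈ cycleReps σ₂, s.1.2 x = t.1.2 x := by
      intro x hx
      by_cases hxD : x ∈ D₂
      · obtain ⟨q, _, hq'⟩ := Finset.mem_image.mp hxD
        have hcyc : σ₂.SameCycle q.out x := hq' ▸ sameCycle_minCyc σ₂ q.out
        have es := const_on_sameCycle s.1.2 s.2.2.1 hcyc
        have et := const_on_sameCycle t.1.2 t.2.2.1 hcyc
        have h1s := (s.2.2.2 q.out).2.1
        have h1t := (t.2.2.2 q.out).2.1
        have := (hq q).1
        omega
      · have hxE : x ∈ E₂ := Finset.mem_sdiff.mpr ⟨hx, hxD⟩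
        have := hc2 x hxE
        have h1s := (s.2.2.2 x).2.1
        have h1t := (t.2.2.2 x).2.1
        omega
    apply Subtype.ext
    apply Prod.ext
    · funext m
      have e1 := const_on_sameCycle s.1.1 s.2.1 (sameCycle_minCyc σ₁ m)
      have e2 := const_on_sameCycle t.1.1 t.2.1 (sameCycle_minCyc σ₁ m)
      rw [e1, e2]
      exact hrep1 _ (minCyc_mem_cycleReps σ₁ m)
    · funext m
      have e1 := const_on_sameCycle s.1.2 s.2.2.1 (sameCycle_minCyc σ₂ m)
      have e2 := const_on_sameCycle t.1.2 t.2.2.1 (sameCycle_minCyc σ₂ m)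
      rw [e1, e2]
      exact hrep2 _ (minCyc_mem_cycleReps σ₂ m)
  rw [hNcol]
  refine key.trans (le_of_eq ?_)
  rw [Nat.card_eq_fintype_card]
  rw [Fintype.card_prod, Fintype.card_prod, Fintype.card_fun, Fintype.card_fun,
    Fintype.card_fun, Fintype.card_coe, Fintype.card_coe, Fintype.card_coe,
    Fintype.card_fin, Fintype.card_fin, hE₁card, hE₂card, ← hjo]

end NcolAux
theorem Ncol_estimate (μ : YoungDiagram) (n : ℕ) (hcard : μ.card = n) (A : ℝ)
    (hA₁ : (rows μ : ℝ) ≤ A) (hA₂ : (cols μ : ℝ) ≤ A) (hAn : A ≤ n)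
    (l : ℕ) (σ₁ σ₂ π : Equiv.Perm (Fin l)) (hπ : σ₁ * σ₂ = π) :
    (Ncol μ σ₁ σ₂ : ℝ) ≤
        A ^ (cyclesCount σ₁ + cyclesCount σ₂) * ((n : ℝ) / A ^ 2) ^ jointOrbits σ₁ σ₂ ∧
      A ^ (cyclesCount σ₁ + cyclesCount σ₂) * ((n : ℝ) / A ^ 2) ^ jointOrbits σ₁ σ₂ ≤
        A ^ (l - cyclesCount π) * (n : ℝ) ^ cyclesCount π * (1 / A) ^ oStat σ₁ σ₂ := by
  classical
  obtain ⟨h1, h2, hbound⟩ := Ncol_count_bound μ σ₁ σ₂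
  have hπG : π ∈ Subgroup.closure ({σ₁, σ₂} : Set (Equiv.Perm (Fin l))) := by
    rw [← hπ]
    exact Subgroup.mul_mem _ (Subgroup.subset_closure (by simp))
      (Subgroup.subset_closure (by simp))
  have hσ₁G : σ₁ ∈ Subgroup.closure ({σ₁, σ₂} : Set (Equiv.Perm (Fin l))) :=
    Subgroup.subset_closure (by simp)
  set o := jointOrbits σ₁ σ₂ with ho
  set c1 := cyclesCount σ₁ with hc1def
  set c2 := cyclesCount σ₂ with hc2def
  set cp := cyclesCount π with hcpdef
  have h3 : o ≤ cp := jointOrbits_le hπG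
  have h4 : cp ≤ l := cyclesCount_le π
  have hostat : oStat σ₁ σ₂ = (l : ℤ) - c1 - c2 + o := rfl
  have hA0 : (0 : ℝ) ≤ A := le_trans (Nat.cast_nonneg _) hA₁
  rcases hA0.lt_or_eq with hApos | hAzero
  · -- A > 0
    have hne : A ≠ 0 := ne_of_gt hApos
    have hn0 : (0 : ℝ) ≤ (n : ℝ) := Nat.cast_nonneg n
    constructor
    · -- first inequality
      have hcast : (Ncol μ σ₁ σ₂ : ℝ) ≤
          (n : ℝ) ^ o * ((cols μ : ℝ) ^ (c1 - o) * (rows μ : ℝ) ^ (c2 - o)) := by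
        have hb := hbound
        rw [hcard] at hb
        exact_mod_cast hb
      refine hcast.trans ?_
      have hb1 : (cols μ : ℝ) ^ (c1 - o) ≤ A ^ (c1 - o) :=
        pow_le_pow_left₀ (Nat.cast_nonneg _) hA₂ _
      have hb2 : (rows μ : ℝ) ^ (c2 - o) ≤ A ^ (c2 - o) :=
        pow_le_pow_left₀ (Nat.cast_nonneg _) hA₁ _
      have step : (n : ℝ) ^ o * ((cols μ : ℝ) ^ (c1 - o) * (rows μ : ℝ) ^ (c2 - o)) ≤
          (n : ℝ) ^ o * (A ^ (c1 - o) * A ^ (c2 - o)) := by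
        refine mul_le_mul_of_nonneg_left ?_ (by positivity)
        exact mul_le_mul hb1 hb2 (by positivity) (by positivity)
      refine step.trans (le_of_eq ?_)
      have hexp : c1 + c2 = (c1 - o) + (c2 - o) + 2 * o := by omega
      rw [div_pow, ← pow_mul, hexp, pow_add, pow_add]
      have h2o : A ^ (2 * o) ≠ 0 := pow_ne_zero _ hne
      field_simp
    · -- second inequality
      have eL : A ^ (c1 + c2) * ((n : ℝ) / A ^ 2) ^ o =
          (n : ℝ) ^ o * A ^ (((c1 + c2 : ℕ) : ℤ) + (-(((2 * o : ℕ) : ℤ)))) := by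
        rw [zpow_add₀ hne, div_pow, ← pow_mul, ← zpow_natCast A (c1 + c2),
          ← zpow_natCast A (2 * o), zpow_neg, div_eq_mul_inv]
        ring
      have eR : A ^ (l - cp) * (n : ℝ) ^ cp * (1 / A) ^ oStat σ₁ σ₂ =
          (n : ℝ) ^ cp * A ^ ((((l - cp : ℕ) : ℤ)) + (-(oStat σ₁ σ₂))) := by
        rw [zpow_add₀ hne, one_div, inv_zpow, ← zpow_neg, ← zpow_natCast A (l - cp)]
        ring
      rw [eL, eR]
      have hz1 : ((c1 + c2 : ℕ) : ℤ) + (-(((2 * o : ℕ) : ℤ))) =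
          (((l - cp : ℕ) : ℤ) + (-(oStat σ₁ σ₂))) + ((cp - o : ℕ) : ℤ) := by
        rw [hostat]; omega
      rw [hz1, zpow_add₀ hne, zpow_natCast]
      have hnπ : (n : ℝ) ^ cp = (n : ℝ) ^ o * (n : ℝ) ^ (cp - o) := by
        rw [← pow_add]; congr 1; omega
      rw [hnπ]
      have hAn' : A ^ (cp - o) ≤ (n : ℝ) ^ (cp - o) := pow_le_pow_left₀ hA0 hAn _
      set w : ℤ := ((l - cp : ℕ) : ℤ) + (-(oStat σ₁ σ₂)) with hw
      have hwnn : (0 : ℝ) ≤ A ^ w := zpow_nonneg hA0 _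
      calc (n : ℝ) ^ o * (A ^ w * A ^ (cp - o))
          = ((n : ℝ) ^ o * A ^ w) * A ^ (cp - o) := by ring
        _ ≤ ((n : ℝ) ^ o * A ^ w) * (n : ℝ) ^ (cp - o) :=
            mul_le_mul_of_nonneg_left hAn' (mul_nonneg (pow_nonneg hn0 _) hwnn)
        _ = (n : ℝ) ^ o * (n : ℝ) ^ (cp - o) * A ^ w := by ring
  · -- A = 0
    subst hAzero
    have hrows : rows μ = 0 := by
      have h := le_antisymm hA₁ (Nat.cast_nonneg _)
      exact_mod_cast h
    have hμempty : ∀ x : ℕ × ℕ, x ∉ μ := by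
      intro x hx
      have hx' : (x.1, x.2) ∈ μ := by simpa using hx
      rw [YoungDiagram.mem_iff_lt_colLen] at hx'
      have hcl : μ.colLen x.2 ≤ μ.colLen 0 := μ.colLen_anti 0 _ (Nat.zero_le _)
      have : μ.colLen 0 = 0 := hrows
      omega
    have hcells : μ.cells = ∅ :=
      Finset.eq_empty_of_forall_notMem (fun x hx => hμempty x ((YoungDiagram.mem_cells _).mp hx))
    have hn : n = 0 := by
      rw [← hcard, show μ.card = μ.cells.card from rfl, hcells]
      rfl
    subst hn
    by_cases hl : l = 0
    · subst hl
      have hc1 : c1 = 0 := Nat.le_zero.mp (cyclesCount_le σ₁)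
      have hc2 : c2 = 0 := Nat.le_zero.mp (cyclesCount_le σ₂)
      have hcp : cp = 0 := Nat.le_zero.mp (cyclesCount_le π)
      have hjo : o = 0 := Nat.le_zero.mp ((jointOrbits_le hσ₁G).trans_eq hc1)
      have hNcol1 : Ncol μ σ₁ σ₂ = 1 := by
        refine Nat.card_eq_one_iff_unique.mpr ⟨⟨fun a b => ?_⟩, ⟨⟨(fun _ => 1, fun _ => 1),
          fun m => m.elim0, fun m => m.elim0, fun m => m.elim0⟩⟩⟩
        apply Subtype.ext
        apply Prod.ext <;> funext m <;> exact m.elim0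
      rw [hNcol1, hc1, hc2, hcp, hjo]
      constructor
      · norm_num
      · simp [hostat, hc1, hc2, hjo]
    · have hl0 : 0 < l := Nat.pos_of_ne_zero hl
      have hNcol0 : Ncol μ σ₁ σ₂ = 0 :=
        Nat.card_eq_zero.mpr (Or.inl ⟨fun s => hμempty _ (s.2.2.2 ⟨0, hl0⟩).2.2⟩)
      have hc1p : 0 < c1 := cyclesCount_pos σ₁ hl0
      constructor
      · rw [hNcol0]
        push_cast
        refine mul_nonneg (pow_nonneg le_rfl _) (pow_nonneg ?_ _)
        positivity
      · rw [zero_pow (by omega : c1 + c2 ≠ 0), zero_mul]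
        refine mul_nonneg (mul_nonneg (pow_nonneg le_rfl _) (pow_nonneg (Nat.cast_nonneg _) _))
          (zpow_nonneg (by norm_num) _)

end Paper
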